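/- Let (A,*) be a right alternative superalgebra, with super-Jordan product x ∘ y = (1/2)(x*y + (-1)^{|x||y|} y*x) and supercommutator [x,y] = (1/2)(x*y - (-1)^{|x||y|} y*x). Then for all homogeneous x,y,z: 2(-1)^{|x|(|y|+|z|)}((y∘z)∘x - y∘(z∘x)) = 2[[x,y],z] - (-1)^{|z|(|x|+|y|)}((z*x)*y - z*(x*y)). -/
import Mathlib


def sgn (K : Type*) [Field K] (i j : ZMod 2) : K := (-1 : K) ^ (i * j).val

def IsBilin (K : Type*) {A : Type*} [Field K] [AddCommGroup A] [Module K A]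
    (f : A → A → A) : Prop :=
  (∀ (c : K) (x y : A), f (c • x) y = c • f x y) ∧
  (∀ x x' y : A, f (x + x') y = f x y + f x' y) ∧
  (∀ (c : K) (x y : A), f x (c • y) = c • f x y) ∧
  (∀ x y y' : A, f x (y + y') = f x y + f x y')

def IsTrilin (K : Type*) {A : Type*} [Field K] [AddCommGroup A] [Module K A]
    (f : A → A → A → A) : Prop :=
  (∀ (c : K) (x y z : A), f (c • x) y z = c • f x y z) ∧
  (∀ x x' y z : A, f (x + x') y z = f x y z + f x' y z) ∧
  (∀ (c : K) (x y z : A), f x (c • y) z = c • f x y z) ∧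
  (∀ x y y' z : A, f x (y + y') z = f x y z + f x y' z) ∧
  (∀ (c : K) (x y z : A), f x y (c • z) = c • f x y z) ∧
  (∀ x y z z' : A, f x y (z + z') = f x y z + f x y z')

def asc {A : Type*} [AddCommGroup A] (mul : A → A → A) (x y z : A) : A :=
  mul (mul x y) z - mul x (mul y z)

def hasc {A : Type*} [AddCommGroup A] (mul : A → A → A) (α : A → A) (x y z : A) : A :=
  mul (mul x y) (α z) - mul (α x) (mul y z)

def br (K : Type*) {A : Type*} [Field K] [AddCommGroup A] [Module K A]
    (mul : A → A → A) (i j : ZMod 2) (x y : A) : A :=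
  (2 : K)⁻¹ • (mul x y - sgn K i j • mul y x)

def jp (K : Type*) {A : Type*} [Field K] [AddCommGroup A] [Module K A]
    (mul : A → A → A) (i j : ZMod 2) (x y : A) : A :=
  (2 : K)⁻¹ • (mul x y + sgn K i j • mul y x)

set_option maxHeartbeats 1600000 in
/-- Lemma 3.1: alternative expression of the ternary operation in a right
alternative superalgebra. -/
theorem stmt2 {K A : Type*} [Field K] [AddCommGroup A] [Module K A]
    (h2 : (2 : K) ≠ 0) (h3 : (3 : K) ≠ 0)
    (𝒜 : ZMod 2 → Submodule K A) (hds : DirectSum.IsInternal 𝒜)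
    (mul : A → A → A) (hbil : IsBilin K mul)
    (hgr : ∀ (i j : ZMod 2) (x y : A), x ∈ 𝒜 i → y ∈ 𝒜 j → mul x y ∈ 𝒜 (i + j))
    (halt : ∀ (i j k : ZMod 2) (x y z : A), x ∈ 𝒜 i → y ∈ 𝒜 j → z ∈ 𝒜 k →
      asc mul x y z = (-(sgn K j k)) • asc mul x z y)
    (i j k : ZMod 2) (x y z : A)
    (hx : x ∈ 𝒜 i) (hy : y ∈ 𝒜 j) (hz : z ∈ 𝒜 k) :
    (2 : K) • sgn K i (j + k) •
        (jp K mul (j + k) i (jp K mul j k y z) x - jp K mul j (k + i) y (jp K mul k i z x))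
      = (2 : K) • br K mul (i + j) k (br K mul i j x y) z
        - sgn K k (i + j) • (mul (mul z x) y - mul z (mul x y)) := by
  obtain ⟨hsl, hal, hsr, har⟩ := hbil
  have hnl : ∀ u v : A, mul (-u) v = -mul u v := fun u v => by
    rw [← neg_one_smul K u, hsl, neg_one_smul]
  have hnr : ∀ u v : A, mul u (-v) = -mul u v := fun u v => by
    rw [← neg_one_smul K v, hsr, neg_one_smul]
  have hsubl : ∀ u u' v : A, mul (u - u') v = mul u v - mul u' v := fun u u' v => by
    rw [sub_eq_add_neg, hal, hnl, sub_eq_add_neg]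
  have hsubr : ∀ u v v' : A, mul u (v - v') = mul u v - mul u v' := fun u v v' => by
    rw [sub_eq_add_neg, har, hnr, sub_eq_add_neg]
  have H1 := halt i k j x z y hx hz hy
  have H2 := halt j k i y z x hy hz hx
  have H3 := halt k j i z y x hz hy hx
  simp only [asc] at H1 H2 H3
  simp only [jp, br, hsl, hsr, hal, har, hsubl, hsubr, smul_add, smul_sub, smul_smul]
  have hcases : ∀ m : ZMod 2, m = 0 ∨ m = 1 := by decide
  rcases hcases i with rfl | rfl
  · rcases hcases j with rfl | rfl
    · rcases hcases k with rfl | rfl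
      · simp only [sgn, show ((1:ZMod 2)+1) = 0 by decide, show ((0:ZMod 2)+1) = 1 by decide,
          show ((1:ZMod 2)+0) = 1 by decide, show ((0:ZMod 2)+0) = 0 by decide,
          zero_mul, mul_zero, one_mul, mul_one,
          show (ZMod.val (0 : ZMod 2)) = 0 by decide, show (ZMod.val (1 : ZMod 2)) = 1 by decide,
          pow_zero, pow_one, one_smul, neg_smul, neg_neg, smul_neg, neg_one_smul] at H1 H2 H3 ⊢
        linear_combination (norm := (match_scalars <;> field_simp <;> ring1))
          (-(2:K)⁻¹) • H1 + ((2:K)⁻¹) • H2 + ((2:K)⁻¹) • H3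
      · simp only [sgn, show ((1:ZMod 2)+1) = 0 by decide, show ((0:ZMod 2)+1) = 1 by decide,
          show ((1:ZMod 2)+0) = 1 by decide, show ((0:ZMod 2)+0) = 0 by decide,
          zero_mul, mul_zero, one_mul, mul_one,
          show (ZMod.val (0 : ZMod 2)) = 0 by decide, show (ZMod.val (1 : ZMod 2)) = 1 by decide,
          pow_zero, pow_one, one_smul, neg_smul, neg_neg, smul_neg, neg_one_smul] at H1 H2 H3 ⊢
        linear_combination (norm := (match_scalars <;> field_simp <;> ring1))
          (-(2:K)⁻¹) • H1 + ((2:K)⁻¹) • H2 + ((2:K)⁻¹) • H3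
    · rcases hcases k with rfl | rfl
      · simp only [sgn, show ((1:ZMod 2)+1) = 0 by decide, show ((0:ZMod 2)+1) = 1 by decide,
          show ((1:ZMod 2)+0) = 1 by decide, show ((0:ZMod 2)+0) = 0 by decide,
          zero_mul, mul_zero, one_mul, mul_one,
          show (ZMod.val (0 : ZMod 2)) = 0 by decide, show (ZMod.val (1 : ZMod 2)) = 1 by decide,
          pow_zero, pow_one, one_smul, neg_smul, neg_neg, smul_neg, neg_one_smul] at H1 H2 H3 ⊢
        linear_combination (norm := (match_scalars <;> field_simp <;> ring1))
          (-(2:K)⁻¹) • H1 + ((2:K)⁻¹) • H2 + ((2:K)⁻¹) • H3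
      · simp only [sgn, show ((1:ZMod 2)+1) = 0 by decide, show ((0:ZMod 2)+1) = 1 by decide,
          show ((1:ZMod 2)+0) = 1 by decide, show ((0:ZMod 2)+0) = 0 by decide,
          zero_mul, mul_zero, one_mul, mul_one,
          show (ZMod.val (0 : ZMod 2)) = 0 by decide, show (ZMod.val (1 : ZMod 2)) = 1 by decide,
          pow_zero, pow_one, one_smul, neg_smul, neg_neg, smul_neg, neg_one_smul] at H1 H2 H3 ⊢
        linear_combination (norm := (match_scalars <;> field_simp <;> ring1))
          ((2:K)⁻¹) • H1 + ((2:K)⁻¹) • H2 + (-(2:K)⁻¹) • H3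
  · rcases hcases j with rfl | rfl
    · rcases hcases k with rfl | rfl
      · simp only [sgn, show ((1:ZMod 2)+1) = 0 by decide, show ((0:ZMod 2)+1) = 1 by decide,
          show ((1:ZMod 2)+0) = 1 by decide, show ((0:ZMod 2)+0) = 0 by decide,
          zero_mul, mul_zero, one_mul, mul_one,
          show (ZMod.val (0 : ZMod 2)) = 0 by decide, show (ZMod.val (1 : ZMod 2)) = 1 by decide,
          pow_zero, pow_one, one_smul, neg_smul, neg_neg, smul_neg, neg_one_smul] at H1 H2 H3 ⊢
        linear_combination (norm := (match_scalars <;> field_simp <;> ring1))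
          (-(2:K)⁻¹) • H1 + ((2:K)⁻¹) • H2 + ((2:K)⁻¹) • H3
      · simp only [sgn, show ((1:ZMod 2)+1) = 0 by decide, show ((0:ZMod 2)+1) = 1 by decide,
          show ((1:ZMod 2)+0) = 1 by decide, show ((0:ZMod 2)+0) = 0 by decide,
          zero_mul, mul_zero, one_mul, mul_one,
          show (ZMod.val (0 : ZMod 2)) = 0 by decide, show (ZMod.val (1 : ZMod 2)) = 1 by decide,
          pow_zero, pow_one, one_smul, neg_smul, neg_neg, smul_neg, neg_one_smul] at H1 H2 H3 ⊢
        linear_combination (norm := (match_scalars <;> field_simp <;> ring1))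
          (-(2:K)⁻¹) • H1 + (-(2:K)⁻¹) • H2 + (-(2:K)⁻¹) • H3
    · rcases hcases k with rfl | rfl
      · simp only [sgn, show ((1:ZMod 2)+1) = 0 by decide, show ((0:ZMod 2)+1) = 1 by decide,
          show ((1:ZMod 2)+0) = 1 by decide, show ((0:ZMod 2)+0) = 0 by decide,
          zero_mul, mul_zero, one_mul, mul_one,
          show (ZMod.val (0 : ZMod 2)) = 0 by decide, show (ZMod.val (1 : ZMod 2)) = 1 by decide,
          pow_zero, pow_one, one_smul, neg_smul, neg_neg, smul_neg, neg_one_smul] at H1 H2 H3 ⊢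
        linear_combination (norm := (match_scalars <;> field_simp <;> ring1))
          (-(2:K)⁻¹) • H1 + (-(2:K)⁻¹) • H2 + (-(2:K)⁻¹) • H3
      · simp only [sgn, show ((1:ZMod 2)+1) = 0 by decide, show ((0:ZMod 2)+1) = 1 by decide,
          show ((1:ZMod 2)+0) = 1 by decide, show ((0:ZMod 2)+0) = 0 by decide,
          zero_mul, mul_zero, one_mul, mul_one,
          show (ZMod.val (0 : ZMod 2)) = 0 by decide, show (ZMod.val (1 : ZMod 2)) = 1 by decide,
          pow_zero, pow_one, one_smul, neg_smul, neg_neg, smul_neg, neg_one_smul] at H1 H2 H3 ⊢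
        linear_combination (norm := (match_scalars <;> field_simp <;> ring1))
          ((2:K)⁻¹) • H1 + ((2:K)⁻¹) • H2 + (-(2:K)⁻¹) • H3
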